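/- For every Schwartz function f : ℝ → ℂ, the Weil–Gel'fand–Zak transform Wf satisfies the quasi-periodicity relation Wf(x+m, y+n) = (−1)^{mn} e^{πi(nx − my)} Wf(x,y) for all (m,n) ∈ ℤ² and all (x,y) ∈ ℝ²; that is, Wf is a smooth section of the line bundle L over the torus Π = (ℝ/ℤ)² with multiplier φ((m,n),(x,y)) = (−1)^{mn} e^{πi(nx − my)}. -/
import Mathlib


open Complex

/-- The Weil–Gel'fand–Zak transform `Wf(x,y) = e^{πixy} Σ_{m∈ℤ} f(x+m) e^{2πimy}`. -/
noncomputable def wgz (f : ℝ → ℂ) : ℝ × ℝ → ℂ :=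
  fun p =>
    Complex.exp (Real.pi * Complex.I * (p.1 : ℂ) * (p.2 : ℂ)) *
      ∑' m : ℤ, f (p.1 + m) * Complex.exp (2 * Real.pi * Complex.I * (m : ℂ) * (p.2 : ℂ))

/-- For a Schwartz function `f`, the WGZ transform satisfies the
quasi-periodicity `Wf(x+m, y+n) = (−1)^{mn} e^{πi(nx − my)} Wf(x,y)`, i.e. it is a
smooth section of the line bundle `L` over the torus `(ℝ/ℤ)²` with multiplier
`φ((m,n),(x,y)) = (−1)^{mn} e^{πi(nx−my)}`. -/
theorem wgz_quasi_periodicity (f : SchwartzMap ℝ ℂ) :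
    ∀ (m n : ℤ) (x y : ℝ),
      wgz f (x + m, y + n) =
        (-1 : ℂ) ^ (m * n) *
          Complex.exp (Real.pi * Complex.I * ((n : ℂ) * (x : ℂ) - (m : ℂ) * (y : ℂ))) *
          wgz f (x, y) := by
  intro m n x y
  unfold wgz
  simp only
  -- Step 1: kill the `n` in the phase of each term
  have h1 : (∑' k : ℤ, f ((x + (m : ℝ)) + k) *
        Complex.exp (2 * Real.pi * Complex.I * (k : ℂ) * (((y + (n : ℝ)) : ℝ) : ℂ)))
      = ∑' k : ℤ, f ((x + (m : ℝ)) + k) *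
        Complex.exp (2 * Real.pi * Complex.I * (k : ℂ) * (y : ℂ)) := by
    congr 1
    funext k
    congr 1
    rw [show (2 * (Real.pi : ℂ) * Complex.I * (k : ℂ) * (((y + (n : ℝ)) : ℝ) : ℂ))
        = (2 * Real.pi * Complex.I * (k : ℂ) * (y : ℂ))
          + ((k * n : ℤ) : ℂ) * (2 * Real.pi * Complex.I) by push_cast; ring,
      Complex.exp_add, Complex.exp_int_mul_two_pi_mul_I, mul_one]
  rw [h1]
  -- Step 2: reindex the sum, shifting by m
  have h2 : (∑' k : ℤ, f ((x + (m : ℝ)) + k) *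
        Complex.exp (2 * Real.pi * Complex.I * (k : ℂ) * (y : ℂ)))
      = Complex.exp (-(2 * Real.pi * Complex.I * (m : ℂ) * (y : ℂ))) *
        ∑' k : ℤ, f (x + k) * Complex.exp (2 * Real.pi * Complex.I * (k : ℂ) * (y : ℂ)) := by
    rw [← (Equiv.subRight (m : ℤ)).tsum_eq, ← tsum_mul_left]
    congr 1
    funext k
    simp only [Equiv.subRight_apply]
    have ha : (x + (m : ℝ)) + ((k - m : ℤ) : ℝ) = x + (k : ℝ) := by push_cast; ring
    rw [ha, show (2 * (Real.pi : ℂ) * Complex.I * ((k - m : ℤ) : ℂ) * (y : ℂ))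
        = (2 * Real.pi * Complex.I * (k : ℂ) * (y : ℂ))
          + (-(2 * Real.pi * Complex.I * (m : ℂ) * (y : ℂ))) by push_cast; ring,
      Complex.exp_add]
    ring
  rw [h2]
  -- Step 3: combine the exponentials
  have h3 : ((-1 : ℂ) ^ (m * n)) = Complex.exp (((m * n : ℤ) : ℂ) * (Real.pi * Complex.I)) := by
    rw [Complex.exp_int_mul, Complex.exp_pi_mul_I]
  rw [h3, ← Complex.exp_add, ← mul_assoc, ← Complex.exp_add, ← mul_assoc, ← Complex.exp_add]
  congr 1
  push_cast
  ring
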